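/- Let m, r, k be positive integers with m ≥ 2, and let Δ: [1, g(m,r)-k] → [1,r] be a coloring. Let a = min over colors c of the m-th smallest element of Δ^{-1}(c) (assuming each color class has at least m elements; otherwise interpret appropriately), and for each color c set A_c = |Δ^{-1}(c) ∩ [1, a-1]| and B_c = |Δ^{-1}(c) ∩ [a+1, g(m,r)-k]|. If Σ_{c=1}^{r} (A_c + min{B_c, m-1}) ≤ r(2m-2) - k, then Δ is not an L(r)-coloring. -/

import Mathlib

lemma auxExistsDistrib (cap : ℕ → ℕ) (s : Finset ℕ) :
    ∀ (k : ℕ), k ≤ ∑ c ∈ s, cap c →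
      ∃ t : ℕ → ℕ, (∀ c, t c ≤ cap c) ∧ ∑ c ∈ s, t c = k := by
  classical
  induction s using Finset.induction with
  | empty =>
      intro k hk
      simp only [Finset.sum_empty, Nat.le_zero] at hk
      exact ⟨fun _ => 0, fun _ => Nat.zero_le _, by simp [hk]⟩
  | @insert a s ha ih =>
      intro k hk
      rw [Finset.sum_insert ha] at hk
      have h2 : k - min k (cap a) ≤ ∑ c ∈ s, cap c := by omega
      obtain ⟨t, ht1, ht2⟩ := ih (k - min k (cap a)) h2
      refine ⟨fun c => if c = a then min k (cap a) else t c, ?_, ?_⟩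
      · intro c
        by_cases hc : c = a
        · simp [hc]
        · simp [hc, ht1 c]
      · rw [Finset.sum_insert ha]
        have e1 : ∑ c ∈ s, (if c = a then min k (cap a) else t c) = ∑ c ∈ s, t c := by
          apply Finset.sum_congr rfl
          intro c hc
          have : c ≠ a := fun h => ha (h ▸ hc)
          simp [this]
        rw [if_pos rfl, e1, ht2]
        omega

lemma auxExistsKth (S : Finset ℕ) (m : ℕ) (hm : 1 ≤ m) (h0 : 0 ∉ S) (hc : m ≤ S.card) :
    ∃ b ∈ S, (S.filter (fun z => z ≤ b)).card = m := by
  classical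
  have hne : S.Nonempty := Finset.card_pos.mp (by omega)
  have hPmax : m ≤ (S.filter (fun z => z ≤ S.max' hne)).card := by
    have : S.filter (fun z => z ≤ S.max' hne) = S := by
      apply Finset.filter_true_of_mem
      intro z hz; exact Finset.le_max' S z hz
    rw [this]; exact hc
  set P := {b : ℕ | m ≤ (S.filter (fun z => z ≤ b)).card} with hP
  have hPne : P.Nonempty := ⟨S.max' hne, hPmax⟩
  set b := sInf P with hb
  have hbP : m ≤ (S.filter (fun z => z ≤ b)).card := Nat.sInf_mem hPne
  have hb0 : ¬ (0 ∈ P) := by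
    simp only [hP, Set.mem_setOf_eq]
    have : S.filter (fun z => z ≤ 0) = ∅ := by
      apply Finset.filter_false_of_mem
      intro z hz
      have : z ≠ 0 := fun h => h0 (h ▸ hz)
      omega
    rw [this]; simp; omega
  have hb1 : 1 ≤ b := by
    rcases Nat.eq_zero_or_pos b with h | h
    · exact absurd (h ▸ hbP) hb0
    · exact h
  have hprev : ¬ ((b - 1) ∈ P) := Nat.notMem_of_lt_sInf (by omega)
  simp only [hP, Set.mem_setOf_eq, not_le] at hprev
  have hbS : b ∈ S := by
    by_contra hbS
    have hsub : S.filter (fun z => z ≤ b) ⊆ S.filter (fun z => z ≤ b - 1) := by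
      intro z hz
      simp only [Finset.mem_filter] at hz ⊢
      refine ⟨hz.1, ?_⟩
      have : z ≠ b := fun h => hbS (h ▸ hz.1)
      omega
    have := Finset.card_le_card hsub
    omega
  refine ⟨b, hbS, ?_⟩
  have hsub : S.filter (fun z => z ≤ b) ⊆ insert b (S.filter (fun z => z ≤ b - 1)) := by
    intro z hz
    simp only [Finset.mem_filter, Finset.mem_insert] at hz ⊢
    rcases Nat.eq_or_lt_of_le hz.2 with h | h
    · exact Or.inl h
    · exact Or.inr ⟨hz.1, by omega⟩
  have := Finset.card_le_card hsub
  have := Finset.card_insert_le b (S.filter (fun z => z ≤ b - 1))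
  omega

def auxPsum (t : ℕ → ℕ) (c : ℕ) : ℕ := ∑ c' ∈ Finset.Icc 1 c, t c'

noncomputable def auxBlock (t : ℕ → ℕ) (j : ℕ) : ℕ := sInf {c | j < auxPsum t c}

lemma auxPsum_zero (t : ℕ → ℕ) : auxPsum t 0 = 0 := by simp [auxPsum]

lemma auxPsum_succ (t : ℕ → ℕ) (c : ℕ) (hc : 1 ≤ c) :
    auxPsum t c = auxPsum t (c - 1) + t c := by
  rw [auxPsum, auxPsum]
  rw [show Finset.Icc 1 c = insert c (Finset.Icc 1 (c-1)) by
    ext z; simp [Finset.mem_Icc, Finset.mem_insert]; omega]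
  rw [Finset.sum_insert (by simp [Finset.mem_Icc]; omega)]
  omega

lemma auxBlock_spec (t : ℕ → ℕ) (R j : ℕ) (h : j < auxPsum t R) :
    1 ≤ auxBlock t j ∧ auxBlock t j ≤ R ∧
      auxPsum t (auxBlock t j - 1) ≤ j ∧ j < auxPsum t (auxBlock t j) := by
  have hne : {c | j < auxPsum t c}.Nonempty := ⟨R, h⟩
  have hmem : j < auxPsum t (auxBlock t j) := Nat.sInf_mem hne
  have h1 : 1 ≤ auxBlock t j := by
    rcases Nat.eq_zero_or_pos (auxBlock t j) with h' | h'
    · rw [h', auxPsum_zero] at hmem; omega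
    · exact h'
  have hle : auxBlock t j ≤ R := Nat.sInf_le h
  have hprev : auxBlock t j - 1 ∉ {c | j < auxPsum t c} := by
    apply Nat.notMem_of_lt_sInf
    show auxBlock t j - 1 < auxBlock t j
    omega
  simp only [Set.mem_setOf_eq, not_lt] at hprev
  exact ⟨h1, hle, hprev, hmem⟩

lemma auxImageCard (m : ℕ) (x : ℕ → ℕ)
    (hmono : ∀ i j, 1 ≤ i → i < j → j ≤ m → x i < x j) :
    ((Finset.Icc 1 m).image x).card = m := by
  rw [Finset.card_image_of_injOn, Nat.card_Icc]
  · omega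
  · intro i hi j hj hij
    simp only [Finset.coe_Icc, Set.mem_Icc] at hi hj
    rcases lt_trichotomy i j with h | h | h
    · have := hmono i j hi.1 h hj.2; omega
    · exact h
    · have := hmono j i hj.1 h hi.2; omega

/-- `x` is a monochromatic m-set (indexed 1..m) inside `S` under coloring `Δ`. -/
def IsMonoMSet (m : ℕ) (Δ : ℕ → ℕ) (S : Finset ℕ) (x : ℕ → ℕ) : Prop :=
  (∀ i j, 1 ≤ i → i < j → j ≤ m → x i < x j) ∧
  (∀ i, 1 ≤ i → i ≤ m → x i ∈ S) ∧
  (∀ i, 1 ≤ i → i ≤ m → Δ (x i) = Δ (x 1))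

/-- There exist monochromatic m-sets X ≺ Y in `S` with 2(x_m - x_1) ≤ y_m - x_1. -/
def HasGoodPair (m : ℕ) (Δ : ℕ → ℕ) (S : Finset ℕ) : Prop :=
  ∃ x y : ℕ → ℕ, IsMonoMSet m Δ S x ∧ IsMonoMSet m Δ S y ∧
    x m < y 1 ∧ 2 * (x m - x 1) ≤ y m - x 1

/-- `g m r` : least N such that every r-coloring of [1,N] has a good pair. -/
noncomputable def g (m r : ℕ) : ℕ :=
  sInf {N | ∀ Δ : ℕ → ℕ, (∀ z ∈ Finset.Icc 1 N, Δ z ∈ Finset.Icc 1 r) →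
    HasGoodPair m Δ (Finset.Icc 1 N)}

theorem stmt16 (m r k : ℕ) (hm : 2 ≤ m) (hr : 1 ≤ r) (hk : 1 ≤ k)
    (Δ : ℕ → ℕ)
    (hΔ : ∀ z ∈ Finset.Icc 1 (g m r - k), Δ z ∈ Finset.Icc 1 r)
    (a : ℕ)
    -- `a` is the m-th smallest element of some color class...
    (ha : ∃ c ∈ Finset.Icc 1 r,
      a ∈ (Finset.Icc 1 (g m r - k)).filter (fun z => Δ z = c) ∧
      (((Finset.Icc 1 (g m r - k)).filter (fun z => Δ z = c)).filter
        (fun z => z ≤ a)).card = m)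
    -- ...and is minimal among the m-th smallest elements of all color classes
    (ha' : ∀ c ∈ Finset.Icc 1 r, ∀ b,
      b ∈ (Finset.Icc 1 (g m r - k)).filter (fun z => Δ z = c) →
      (((Finset.Icc 1 (g m r - k)).filter (fun z => Δ z = c)).filter
        (fun z => z ≤ b)).card = m → a ≤ b)
    (hsum : ∑ c ∈ Finset.Icc 1 r,
        ((((Finset.Icc 1 (g m r - k)).filter (fun z => Δ z = c)).filter
            (fun z => z ≤ a - 1)).card +
          min ((((Finset.Icc 1 (g m r - k)).filter (fun z => Δ z = c)).filter
            (fun z => a + 1 ≤ z)).card) (m - 1)) ≤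
      r * (2 * m - 2) - k) :
    HasGoodPair m Δ (Finset.Icc 1 (g m r - k)) := by
  classical
  by_contra hGP
  obtain ⟨cs, hcsr, hasmem, hacard⟩ := ha
  set n := g m r - k with hn
  have hamem : a ∈ Finset.Icc 1 n ∧ Δ a = cs := by
    have := Finset.mem_filter.mp hasmem
    exact ⟨this.1, this.2⟩
  have ha1 : 1 ≤ a := (Finset.mem_Icc.mp hamem.1).1
  have han : a ≤ n := (Finset.mem_Icc.mp hamem.1).2
  have hn1 : 1 ≤ n := le_trans ha1 han
  -- the defining set of g is nonempty, g = n + k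
  have hGne : {N | ∀ Δ0 : ℕ → ℕ, (∀ z ∈ Finset.Icc 1 N, Δ0 z ∈ Finset.Icc 1 r) →
      HasGoodPair m Δ0 (Finset.Icc 1 N)}.Nonempty := by
    by_contra hemp
    rw [Set.not_nonempty_iff_eq_empty] at hemp
    have hg0 : g m r = 0 := by
      rw [g, hemp, Nat.sInf_empty]
    omega
  have hgmem : ∀ Δ0 : ℕ → ℕ, (∀ z ∈ Finset.Icc 1 (g m r), Δ0 z ∈ Finset.Icc 1 r) →
      HasGoodPair m Δ0 (Finset.Icc 1 (g m r)) := by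
    have := Nat.sInf_mem hGne
    rw [Set.mem_setOf_eq] at this
    intro Δ0 hΔ0
    exact this Δ0 hΔ0
  have hgk : g m r = n + k := by omega
  -- every color class has at most m-1 elements ≤ a - 1
  have hAle : ∀ c, (((Finset.Icc 1 n).filter (fun z => Δ z = c)).filter
      (fun z => z ≤ a - 1)).card ≤ m - 1 := by
    intro c
    by_contra hcon
    push_neg at hcon
    have hcm : m ≤ (((Finset.Icc 1 n).filter (fun z => Δ z = c)).filter
        (fun z => z ≤ a - 1)).card := by omega
    have h0 : (0:ℕ) ∉ ((Finset.Icc 1 n).filter (fun z => Δ z = c)).filter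
        (fun z => z ≤ a - 1) := by
      simp [Finset.mem_filter, Finset.mem_Icc]
    obtain ⟨b, hbS, hbcard⟩ := auxExistsKth _ m (by omega) h0 hcm
    simp only [Finset.mem_filter, Finset.mem_Icc] at hbS
    have hcr : c ∈ Finset.Icc 1 r := by
      have := hΔ b (Finset.mem_Icc.mpr ⟨hbS.1.1.1, hbS.1.1.2⟩)
      rw [hbS.1.2] at this
      exact this
    have heq : ((Finset.Icc 1 n).filter (fun z => Δ z = c)).filter (fun z => z ≤ b)
        = (((Finset.Icc 1 n).filter (fun z => Δ z = c)).filter (fun z => z ≤ a - 1)).filter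
            (fun z => z ≤ b) := by
      ext z
      simp only [Finset.mem_filter, Finset.mem_Icc]
      constructor
      · rintro ⟨⟨hz1, hz2⟩, hz3⟩
        have : z ≤ a - 1 := by omega
        exact ⟨⟨⟨hz1, hz2⟩, this⟩, hz3⟩
      · rintro ⟨⟨⟨hz1, hz2⟩, _⟩, hz3⟩
        exact ⟨⟨hz1, hz2⟩, hz3⟩
    have := ha' c hcr b
      (Finset.mem_filter.mpr ⟨Finset.mem_Icc.mpr ⟨hbS.1.1.1, hbS.1.1.2⟩, hbS.1.2⟩)
      (by rw [heq]; exact hbcard)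
    omega
  -- the class of a has exactly m-1 elements ≤ a-1
  have hAcs : (((Finset.Icc 1 n).filter (fun z => Δ z = cs)).filter
      (fun z => z ≤ a - 1)).card + 1 = m := by
    have hins : ((Finset.Icc 1 n).filter (fun z => Δ z = cs)).filter (fun z => z ≤ a)
        = insert a (((Finset.Icc 1 n).filter (fun z => Δ z = cs)).filter
            (fun z => z ≤ a - 1)) := by
      ext z
      simp only [Finset.mem_filter, Finset.mem_insert, Finset.mem_Icc]
      constructor
      · rintro ⟨⟨hz1, hz2⟩, hz3⟩
        rcases Nat.eq_or_lt_of_le hz3 with h | h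
        · exact Or.inl h
        · exact Or.inr ⟨⟨hz1, hz2⟩, by omega⟩
      · rintro (h | ⟨⟨hz1, hz2⟩, hz3⟩)
        · subst h
          exact ⟨⟨Finset.mem_Icc.mp hamem.1, hamem.2⟩, le_refl _⟩
        · exact ⟨⟨hz1, hz2⟩, by omega⟩
    have hnm : a ∉ ((Finset.Icc 1 n).filter (fun z => Δ z = cs)).filter
        (fun z => z ≤ a - 1) := by
      simp only [Finset.mem_filter, Finset.mem_Icc]
      omega
    rw [hins, Finset.card_insert_of_notMem hnm] at hacard
    omega
  -- enumerate the bottom m-set of the class of a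
  set W : Finset ℕ := ((Finset.Icc 1 n).filter (fun z => Δ z = cs)).filter (fun z => z ≤ a)
    with hWdef
  set xs : ℕ → ℕ := fun i => (W.orderEmbOfFin hacard) ⟨min (i-1) (m-1), by omega⟩ with hxsdef
  have hxsW : ∀ i, xs i ∈ W := by
    intro i
    rw [hxsdef]
    exact Finset.orderEmbOfFin_mem W hacard _
  have hxsWmem : ∀ i, xs i ∈ Finset.Icc 1 n ∧ Δ (xs i) = cs ∧ xs i ≤ a := by
    intro i
    have := hxsW i
    rw [hWdef] at this
    simp only [Finset.mem_filter] at this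
    exact ⟨this.1.1, this.1.2, this.2⟩
  have hxsmono : ∀ i j, 1 ≤ i → i < j → j ≤ m → xs i < xs j := by
    intro i j h1 h2 h3
    rw [hxsdef]
    apply (W.orderEmbOfFin hacard).strictMono
    rw [Fin.mk_lt_mk]
    omega
  have hxsIsMono : IsMonoMSet m Δ (Finset.Icc 1 n) xs := by
    refine ⟨hxsmono, fun i _ _ => (hxsWmem i).1, fun i _ _ => ?_⟩
    rw [(hxsWmem i).2.1, (hxsWmem 1).2.1]
  have hxsa : xs m = a := by
    apply le_antisymm (hxsWmem m).2.2
    have haW : a ∈ W := by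
      rw [hWdef]
      simp only [Finset.mem_filter]
      exact ⟨⟨hamem.1, hamem.2⟩, le_refl a⟩
    have : a ∈ Set.range (W.orderEmbOfFin hacard) := by
      rw [Finset.range_orderEmbOfFin]
      exact haW
    obtain ⟨j, hj⟩ := this
    rw [← hj, hxsdef]
    apply (W.orderEmbOfFin hacard).monotone
    simp only [Fin.le_def]
    have := j.isLt
    omega
  have hxs1 : 1 ≤ xs 1 := (Finset.mem_Icc.mp (hxsWmem 1).1).1
  have hxs1a : xs 1 ≤ a := (hxsWmem 1).2.2
  -- capacities
  set cap : ℕ → ℕ := fun c => 2*m - 2 -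
      ((((Finset.Icc 1 n).filter (fun z => Δ z = c)).filter (fun z => z ≤ a - 1)).card +
        min ((((Finset.Icc 1 n).filter (fun z => Δ z = c)).filter
          (fun z => a + 1 ≤ z)).card) (m - 1)) with hcapdef
  have hcapval : ∀ c, cap c +
      ((((Finset.Icc 1 n).filter (fun z => Δ z = c)).filter (fun z => z ≤ a - 1)).card +
        min ((((Finset.Icc 1 n).filter (fun z => Δ z = c)).filter
          (fun z => a + 1 ≤ z)).card) (m - 1)) = 2*m - 2 := by
    intro c
    have h1 := hAle c
    have h2 : min ((((Finset.Icc 1 n).filter (fun z => Δ z = c)).filter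
        (fun z => a + 1 ≤ z)).card) (m - 1) ≤ m - 1 := min_le_right _ _
    simp only [hcapdef]
    omega
  have hsums : ∑ c ∈ Finset.Icc 1 r, cap c + ∑ c ∈ Finset.Icc 1 r,
      ((((Finset.Icc 1 n).filter (fun z => Δ z = c)).filter (fun z => z ≤ a - 1)).card +
        min ((((Finset.Icc 1 n).filter (fun z => Δ z = c)).filter
          (fun z => a + 1 ≤ z)).card) (m - 1)) = r * (2*m - 2) := by
    rw [← Finset.sum_add_distrib]
    rw [Finset.sum_congr rfl (fun c _ => hcapval c)]
    rw [Finset.sum_const, Nat.card_Icc, smul_eq_mul]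
    have hr' : r + 1 - 1 = r := by omega
    rw [hr']
  have hsumlow : m - 1 ≤ ∑ c ∈ Finset.Icc 1 r,
      ((((Finset.Icc 1 n).filter (fun z => Δ z = c)).filter (fun z => z ≤ a - 1)).card +
        min ((((Finset.Icc 1 n).filter (fun z => Δ z = c)).filter
          (fun z => a + 1 ≤ z)).card) (m - 1)) := by
    have h2 := Finset.single_le_sum (f := fun c =>
      ((((Finset.Icc 1 n).filter (fun z => Δ z = c)).filter (fun z => z ≤ a - 1)).card +
        min ((((Finset.Icc 1 n).filter (fun z => Δ z = c)).filter
          (fun z => a + 1 ≤ z)).card) (m - 1)))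
      (fun i _ => Nat.zero_le _) hcsr
    omega
  have hkcap : k ≤ ∑ c ∈ Finset.Icc 1 r, cap c := by omega
  obtain ⟨t, htcap, htsum⟩ := auxExistsDistrib cap (Finset.Icc 1 r) k hkcap
  set tL : ℕ → ℕ := fun c => min (t c)
      (m - 1 - (((Finset.Icc 1 n).filter (fun z => Δ z = c)).filter
        (fun z => z ≤ a - 1)).card) with htLdef
  set tT : ℕ → ℕ := fun c => t c - tL c with htTdef
  have hsafeL : ∀ c, (((Finset.Icc 1 n).filter (fun z => Δ z = c)).filter
      (fun z => z ≤ a - 1)).card + tL c ≤ m - 1 := by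
    intro c
    have h1 := hAle c
    simp only [htLdef]
    omega
  have hsafeT : ∀ c, 1 ≤ tT c → (((Finset.Icc 1 n).filter (fun z => Δ z = c)).filter
      (fun z => a + 1 ≤ z)).card + tT c ≤ m - 1 := by
    intro c h1
    have h2 := htcap c
    have h3 := hAle c
    simp only [hcapdef] at h2
    simp only [htTdef, htLdef] at h1 ⊢
    omega
  set kL := ∑ c ∈ Finset.Icc 1 r, tL c with hkLdef
  set kT := ∑ c ∈ Finset.Icc 1 r, tT c with hkTdef
  have hkLT : kL + kT = k := by
    rw [hkLdef, hkTdef, ← Finset.sum_add_distrib, ← htsum]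
    exact Finset.sum_congr rfl (fun c _ => by simp only [htLdef, htTdef]; omega)
  have hPsumL : auxPsum tL r = kL := by rw [hkLdef]; rfl
  have hPsumT : auxPsum tT r = kT := by rw [hkTdef]; rfl
  -- the extended coloring
  set Δ' : ℕ → ℕ := fun w => if w < xs 1 then Δ w else if w < xs 1 + kL
      then auxBlock tL (w - xs 1) else if w ≤ n + kL then Δ (w - kL)
      else auxBlock tT (w - (n + kL) - 1) with hΔ'def
  have hreg1 : ∀ w, w < xs 1 → Δ' w = Δ w := by
    intro w h
    simp only [hΔ'def]
    rw [if_pos h]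
  have hreg2 : ∀ w, xs 1 ≤ w → w < xs 1 + kL → Δ' w = auxBlock tL (w - xs 1) := by
    intro w h1 h2
    simp only [hΔ'def]
    rw [if_neg (by omega), if_pos h2]
  have hreg3 : ∀ w, xs 1 + kL ≤ w → w ≤ n + kL → Δ' w = Δ (w - kL) := by
    intro w h1 h2
    simp only [hΔ'def]
    rw [if_neg (by omega), if_neg (by omega), if_pos h2]
  have hreg4 : ∀ w, n + kL < w → Δ' w = auxBlock tT (w - (n + kL) - 1) := by
    intro w h1
    simp only [hΔ'def]
    rw [if_neg (by omega), if_neg (by omega), if_neg (by omega)]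
  have hΔ'range : ∀ z ∈ Finset.Icc 1 (n + k), Δ' z ∈ Finset.Icc 1 r := by
    intro z hz
    rw [Finset.mem_Icc] at hz
    by_cases c1 : z < xs 1
    · rw [hreg1 z c1]
      exact hΔ z (Finset.mem_Icc.mpr ⟨hz.1, by omega⟩)
    · by_cases c2 : z < xs 1 + kL
      · rw [hreg2 z (by omega) c2]
        have hj : z - xs 1 < auxPsum tL r := by rw [hPsumL]; omega
        obtain ⟨u1, u2, _, _⟩ := auxBlock_spec tL r (z - xs 1) hj
        exact Finset.mem_Icc.mpr ⟨u1, u2⟩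
      · by_cases c3 : z ≤ n + kL
        · rw [hreg3 z (by omega) c3]
          exact hΔ _ (Finset.mem_Icc.mpr ⟨by omega, by omega⟩)
        · rw [hreg4 z (by omega)]
          have hj : z - (n + kL) - 1 < auxPsum tT r := by rw [hPsumT]; omega
          obtain ⟨u1, u2, _, _⟩ := auxBlock_spec tT r _ hj
          exact Finset.mem_Icc.mpr ⟨u1, u2⟩
  -- obtain a good pair in the extended coloring
  have hgp : HasGoodPair m Δ' (Finset.Icc 1 (n + k)) := by
    rw [← hgk]
    exact hgmem Δ' (by rw [hgk]; exact hΔ'range)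
  obtain ⟨x, y, ⟨hxmono, hxmem, hxcol⟩, ⟨hymono, hymem, hycol⟩, hxy, hmet⟩ := hgp
  have hxle : ∀ i, 1 ≤ i → i ≤ m → x i ≤ x m := by
    intro i h1 h2
    rcases Nat.eq_or_lt_of_le h2 with h | h
    · rw [h]
    · exact le_of_lt (hxmono i m h1 h (le_refl m))
  have hxge : ∀ i, 1 ≤ i → i ≤ m → x 1 ≤ x i := by
    intro i h1 h2
    rcases Nat.eq_or_lt_of_le h1 with h | h
    · rw [← h]
    · exact le_of_lt (hxmono 1 i (le_refl 1) h h2)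
  have hyge : ∀ i, 1 ≤ i → i ≤ m → y 1 ≤ y i := by
    intro i h1 h2
    rcases Nat.eq_or_lt_of_le h1 with h | h
    · rw [← h]
    · exact le_of_lt (hymono 1 i (le_refl 1) h h2)
  have hygem : ∀ i, 1 ≤ i → i ≤ m → y i ≤ y m := by
    intro i h1 h2
    rcases Nat.eq_or_lt_of_le h2 with h | h
    · rw [h]
    · exact le_of_lt (hymono i m h1 h (le_refl m))
  -- pool bound below a + kL
  have poolLow : ∀ c, ((Finset.Icc 1 (n + k)).filter (fun w => Δ' w = c ∧ w < a + kL)).card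
      ≤ (((Finset.Icc 1 n).filter (fun z => Δ z = c)).filter (fun z => z ≤ a - 1)).card
        + tL c := by
    intro c
    have hsplit : (Finset.Icc 1 (n + k)).filter (fun w => Δ' w = c ∧ w < a + kL) ⊆
        ((Finset.Icc 1 (n + k)).filter
          (fun w => (Δ' w = c ∧ w < a + kL) ∧ (w < xs 1 ∨ xs 1 + kL ≤ w))) ∪
        ((Finset.Icc 1 (n + k)).filter
          (fun w => (Δ' w = c ∧ w < a + kL) ∧ (xs 1 ≤ w ∧ w < xs 1 + kL))) := by
      intro w hw
      simp only [Finset.mem_filter, Finset.mem_union] at hw ⊢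
      by_cases h : w < xs 1 ∨ xs 1 + kL ≤ w
      · exact Or.inl ⟨hw.1, hw.2, h⟩
      · exact Or.inr ⟨hw.1, hw.2, by omega⟩
    have hb1 : ((Finset.Icc 1 (n + k)).filter
        (fun w => (Δ' w = c ∧ w < a + kL) ∧ (w < xs 1 ∨ xs 1 + kL ≤ w))).card ≤
        (((Finset.Icc 1 n).filter (fun z => Δ z = c)).filter (fun z => z ≤ a - 1)).card := by
      apply Finset.card_le_card_of_injOn (fun w => if w < xs 1 then w else w - kL)
      · intro w hw
        simp only [Finset.mem_coe, Finset.mem_filter, Finset.mem_Icc] at hw ⊢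
        obtain ⟨⟨hw1, hw2⟩, ⟨hw3, hw4⟩, hw5⟩ := hw
        by_cases h : w < xs 1
        · rw [if_pos h]
          rw [hreg1 w h] at hw3
          exact ⟨⟨⟨hw1, by omega⟩, hw3⟩, by omega⟩
        · rw [if_neg h]
          have h6 : xs 1 + kL ≤ w := by omega
          rw [hreg3 w h6 (by omega)] at hw3
          exact ⟨⟨⟨by omega, by omega⟩, hw3⟩, by omega⟩
      · intro w1 h1 w2 h2 heq
        simp only at heq
        rw [Finset.mem_coe, Finset.mem_filter] at h1 h2
        rcases h1.2.2 with hA | hA <;> rcases h2.2.2 with hB | hB <;>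
          split_ifs at heq <;> omega
    have hb2 : ((Finset.Icc 1 (n + k)).filter
        (fun w => (Δ' w = c ∧ w < a + kL) ∧ (xs 1 ≤ w ∧ w < xs 1 + kL))).card ≤ tL c := by
      rcases Finset.eq_empty_or_nonempty ((Finset.Icc 1 (n + k)).filter
          (fun w => (Δ' w = c ∧ w < a + kL) ∧ (xs 1 ≤ w ∧ w < xs 1 + kL))) with he | hne
      · rw [he]; simp
      · obtain ⟨w0, hw0⟩ := hne
        simp only [Finset.mem_filter, Finset.mem_Icc] at hw0
        obtain ⟨⟨h01, h02⟩, ⟨h03, h04⟩, h05, h06⟩ := hw0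
        have hj0 : w0 - xs 1 < auxPsum tL r := by rw [hPsumL]; omega
        have hceq : auxBlock tL (w0 - xs 1) = c := by
          rw [← hreg2 w0 h05 h06]; exact h03
        have hc1 : 1 ≤ c := by
          have hs := (auxBlock_spec tL r (w0 - xs 1) hj0).1
          rw [hceq] at hs
          exact hs
        have hinj : ((Finset.Icc 1 (n + k)).filter
            (fun w => (Δ' w = c ∧ w < a + kL) ∧ (xs 1 ≤ w ∧ w < xs 1 + kL))).card ≤
            (Finset.Ico (auxPsum tL (c - 1)) (auxPsum tL c)).card := by
          apply Finset.card_le_card_of_injOn (fun w => w - xs 1)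
          · intro w hw
            simp only [Finset.mem_coe, Finset.mem_filter, Finset.mem_Icc] at hw
            obtain ⟨⟨g1, g2⟩, ⟨g3, g4⟩, g5, g6⟩ := hw
            have hj : w - xs 1 < auxPsum tL r := by rw [hPsumL]; omega
            have hce : auxBlock tL (w - xs 1) = c := by rw [← hreg2 w g5 g6]; exact g3
            have hspec := auxBlock_spec tL r (w - xs 1) hj
            rw [hce] at hspec
            exact Finset.mem_Ico.mpr ⟨hspec.2.2.1, hspec.2.2.2⟩
          · intro w1 h1 w2 h2 heq
            simp only at heq
            rw [Finset.mem_coe, Finset.mem_filter] at h1 h2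
            have g1 := h1.2.2
            have g2 := h2.2.2
            omega
        have hicos : (Finset.Ico (auxPsum tL (c - 1)) (auxPsum tL c)).card ≤ tL c := by
          rw [Nat.card_Ico]
          have := auxPsum_succ tL c hc1
          omega
        omega
    have hc1 := Finset.card_le_card hsplit
    have hc2 := Finset.card_union_le
      ((Finset.Icc 1 (n + k)).filter
        (fun w => (Δ' w = c ∧ w < a + kL) ∧ (w < xs 1 ∨ xs 1 + kL ≤ w)))
      ((Finset.Icc 1 (n + k)).filter
        (fun w => (Δ' w = c ∧ w < a + kL) ∧ (xs 1 ≤ w ∧ w < xs 1 + kL)))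
    omega
  -- pool bound above a + kL
  have poolHigh : ∀ c, ((Finset.Icc 1 (n + k)).filter (fun w => Δ' w = c ∧ a + kL < w)).card
      ≤ (((Finset.Icc 1 n).filter (fun z => Δ z = c)).filter (fun z => a + 1 ≤ z)).card
        + tT c := by
    intro c
    have hsplit : (Finset.Icc 1 (n + k)).filter (fun w => Δ' w = c ∧ a + kL < w) ⊆
        ((Finset.Icc 1 (n + k)).filter
          (fun w => (Δ' w = c ∧ a + kL < w) ∧ w ≤ n + kL)) ∪
        ((Finset.Icc 1 (n + k)).filter
          (fun w => (Δ' w = c ∧ a + kL < w) ∧ n + kL < w)) := by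
      intro w hw
      simp only [Finset.mem_filter, Finset.mem_union] at hw ⊢
      by_cases h : w ≤ n + kL
      · exact Or.inl ⟨hw.1, hw.2, h⟩
      · exact Or.inr ⟨hw.1, hw.2, by omega⟩
    have hb1 : ((Finset.Icc 1 (n + k)).filter
        (fun w => (Δ' w = c ∧ a + kL < w) ∧ w ≤ n + kL)).card ≤
        (((Finset.Icc 1 n).filter (fun z => Δ z = c)).filter (fun z => a + 1 ≤ z)).card := by
      apply Finset.card_le_card_of_injOn (fun w => w - kL)
      · intro w hw
        simp only [Finset.mem_coe, Finset.mem_filter, Finset.mem_Icc] at hw ⊢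
        obtain ⟨⟨hw1, hw2⟩, ⟨hw3, hw4⟩, hw5⟩ := hw
        rw [hreg3 w (by omega) hw5] at hw3
        exact ⟨⟨⟨by omega, by omega⟩, hw3⟩, by omega⟩
      · intro w1 h1 w2 h2 heq
        simp only at heq
        rw [Finset.mem_coe, Finset.mem_filter] at h1 h2
        have g1 := h1.2.1.2
        have g2 := h2.2.1.2
        omega
    have hb2 : ((Finset.Icc 1 (n + k)).filter
        (fun w => (Δ' w = c ∧ a + kL < w) ∧ n + kL < w)).card ≤ tT c := by
      rcases Finset.eq_empty_or_nonempty ((Finset.Icc 1 (n + k)).filter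
          (fun w => (Δ' w = c ∧ a + kL < w) ∧ n + kL < w)) with he | hne
      · rw [he]; simp
      · obtain ⟨w0, hw0⟩ := hne
        simp only [Finset.mem_filter, Finset.mem_Icc] at hw0
        obtain ⟨⟨h01, h02⟩, ⟨h03, h04⟩, h05⟩ := hw0
        have hj0 : w0 - (n + kL) - 1 < auxPsum tT r := by rw [hPsumT]; omega
        have hceq : auxBlock tT (w0 - (n + kL) - 1) = c := by
          rw [← hreg4 w0 h05]; exact h03
        have hc1 : 1 ≤ c := by
          have hs := (auxBlock_spec tT r (w0 - (n + kL) - 1) hj0).1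
          rw [hceq] at hs
          exact hs
        have hinj : ((Finset.Icc 1 (n + k)).filter
            (fun w => (Δ' w = c ∧ a + kL < w) ∧ n + kL < w)).card ≤
            (Finset.Ico (auxPsum tT (c - 1)) (auxPsum tT c)).card := by
          apply Finset.card_le_card_of_injOn (fun w => w - (n + kL) - 1)
          · intro w hw
            simp only [Finset.mem_coe, Finset.mem_filter, Finset.mem_Icc] at hw
            obtain ⟨⟨g1, g2⟩, ⟨g3, g4⟩, g5⟩ := hw
            have hj : w - (n + kL) - 1 < auxPsum tT r := by rw [hPsumT]; omega
            have hce : auxBlock tT (w - (n + kL) - 1) = c := by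
              rw [← hreg4 w g5]; exact g3
            have hspec := auxBlock_spec tT r (w - (n + kL) - 1) hj
            rw [hce] at hspec
            exact Finset.mem_Ico.mpr ⟨hspec.2.2.1, hspec.2.2.2⟩
          · intro w1 h1 w2 h2 heq
            simp only at heq
            rw [Finset.mem_coe, Finset.mem_filter] at h1 h2
            have g1 := h1.2.2
            have g2 := h2.2.2
            omega
        have hicos : (Finset.Ico (auxPsum tT (c - 1)) (auxPsum tT c)).card ≤ tT c := by
          rw [Nat.card_Ico]
          have := auxPsum_succ tT c hc1
          omega
        omega
    have hc1 := Finset.card_le_card hsplit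
    have hc2 := Finset.card_union_le
      ((Finset.Icc 1 (n + k)).filter
        (fun w => (Δ' w = c ∧ a + kL < w) ∧ w ≤ n + kL))
      ((Finset.Icc 1 (n + k)).filter
        (fun w => (Δ' w = c ∧ a + kL < w) ∧ n + kL < w))
    omega
  -- claim 1 : x m is at least a + kL
  have hclaim1 : a + kL ≤ x m := by
    by_contra hcon
    push_neg at hcon
    have himg : (Finset.Icc 1 m).image x ⊆ (Finset.Icc 1 (n + k)).filter
        (fun w => Δ' w = Δ' (x 1) ∧ w < a + kL) := by
      intro w hw
      rw [Finset.mem_image] at hw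
      obtain ⟨i, hi, rfl⟩ := hw
      rw [Finset.mem_Icc] at hi
      rw [Finset.mem_filter]
      refine ⟨hxmem i hi.1 hi.2, hxcol i hi.1 hi.2, ?_⟩
      have := hxle i hi.1 hi.2
      omega
    have h1 := Finset.card_le_card himg
    rw [auxImageCard m x hxmono] at h1
    have h2 := poolLow (Δ' (x 1))
    have h3 := hsafeL (Δ' (x 1))
    omega
  -- claim 2 : all of y lies in the (shifted) old upper region
  have hup : ∀ i, 1 ≤ i → i ≤ m → y i ≤ n + kL := by
    by_contra hcon
    push_neg at hcon
    obtain ⟨i0, h1, h2, h3⟩ := hcon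
    have he : Δ' (y i0) = Δ' (y 1) := hycol i0 h1 h2
    have hymem0 := hymem i0 h1 h2
    rw [Finset.mem_Icc] at hymem0
    have hj0 : y i0 - (n + kL) - 1 < auxPsum tT r := by rw [hPsumT]; omega
    have hceq : auxBlock tT (y i0 - (n + kL) - 1) = Δ' (y 1) := by
      rw [← hreg4 (y i0) h3]; exact he
    have hspec := auxBlock_spec tT r (y i0 - (n + kL) - 1) hj0
    rw [hceq] at hspec
    have htT1 : 1 ≤ tT (Δ' (y 1)) := by
      have hps := auxPsum_succ tT (Δ' (y 1)) hspec.1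
      omega
    have hsafe := hsafeT (Δ' (y 1)) htT1
    have himg : (Finset.Icc 1 m).image y ⊆ (Finset.Icc 1 (n + k)).filter
        (fun w => Δ' w = Δ' (y 1) ∧ a + kL < w) := by
      intro w hw
      rw [Finset.mem_image] at hw
      obtain ⟨i, hi, rfl⟩ := hw
      rw [Finset.mem_Icc] at hi
      rw [Finset.mem_filter]
      refine ⟨hymem i hi.1 hi.2, hycol i hi.1 hi.2, ?_⟩
      have := hyge i hi.1 hi.2
      omega
    have h1' := Finset.card_le_card himg
    rw [auxImageCard m y hymono] at h1'
    have h2' := poolHigh (Δ' (y 1))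
    omega
  have hylow : ∀ i, 1 ≤ i → i ≤ m → a + kL < y i := by
    intro i h1 h2
    have := hyge i h1 h2
    omega
  -- the shifted y is a mono m-set of the original coloring
  have hy'mono : IsMonoMSet m Δ (Finset.Icc 1 n) (fun i => y i - kL) := by
    refine ⟨?_, ?_, ?_⟩
    · intro i j h1 h2 h3
      have h4 := hymono i j h1 h2 h3
      have h5 := hylow i h1 (by omega)
      simp only
      omega
    · intro i h1 h2
      have h4 := hylow i h1 h2
      have h5 := hup i h1 h2
      simp only
      rw [Finset.mem_Icc]
      omega
    · intro i h1 h2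
      have h4 := hylow i h1 h2
      have h5 := hup i h1 h2
      have h6 := hylow 1 (le_refl 1) (by omega)
      have h7 := hup 1 (le_refl 1) (by omega)
      show Δ (y i - kL) = Δ (y 1 - kL)
      rw [← hreg3 (y i) (by omega) h5, ← hreg3 (y 1) (by omega) h7]
      exact hycol i h1 h2
  have hy1up : y 1 ≤ n + kL := hup 1 (le_refl 1) (by omega)
  have hy1low : a + kL < y 1 := hylow 1 (le_refl 1) (by omega)
  have hymup : y m ≤ n + kL := hup m (by omega) (le_refl m)
  have hymlow : a + kL < y m := hylow m (by omega) (le_refl m)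
  have hxmn : x m ≤ n + kL := by omega
  -- final case analysis on x 1
  by_cases hc1 : x 1 < xs 1 + kL
  · have hord : xs m < (fun i => y i - kL) 1 := by
      simp only
      rw [hxsa]
      omega
    have hno : ¬ (2 * (xs m - xs 1) ≤ (fun i => y i - kL) m - xs 1) := by
      intro hcon
      exact hGP ⟨xs, fun i => y i - kL, hxsIsMono, hy'mono, hord, hcon⟩
    simp only at hno
    rw [hxsa] at hno
    have hx1mem := hxmem 1 (le_refl 1) (by omega)
    rw [Finset.mem_Icc] at hx1mem
    omega
  · push_neg at hc1
    have hx'mono : IsMonoMSet m Δ (Finset.Icc 1 n) (fun i => x i - kL) := by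
      refine ⟨?_, ?_, ?_⟩
      · intro i j h1 h2 h3
        have h4 := hxmono i j h1 h2 h3
        have h5 := hxge i h1 (by omega)
        simp only
        omega
      · intro i h1 h2
        have h4 := hxge i h1 h2
        have h5 := hxle i h1 h2
        simp only
        rw [Finset.mem_Icc]
        omega
      · intro i h1 h2
        have h4 := hxge i h1 h2
        have h5 := hxle i h1 h2
        show Δ (x i - kL) = Δ (x 1 - kL)
        rw [← hreg3 (x i) (by omega) (by omega), ← hreg3 (x 1) (by omega) (by omega)]
        exact hxcol i h1 h2
    have hord : (fun i => x i - kL) m < (fun i => y i - kL) 1 := by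
      simp only
      omega
    have hno : ¬ (2 * ((fun i => x i - kL) m - (fun i => x i - kL) 1) ≤
        (fun i => y i - kL) m - (fun i => x i - kL) 1) := by
      intro hcon
      exact hGP ⟨fun i => x i - kL, fun i => y i - kL, hx'mono, hy'mono, hord, hcon⟩
    simp only at hno
    omega
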